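/- Consider n = m = 1, f(x) = x²/2 and h(x) = x, so that for t > 0 the smoothing function is L̃_{λ,r}(x,t) = x²/2 + λx + (r/(2t))x² + (r/2)t, with gradient ∇L̃_{λ,r}(x,t) = (x + λ + (r/t)x, (r/2)(1 − x²/t²)). For every λ ∈ ℝ, c > 0 and r ≥ |λ| + c, there exists ε₀ > 0 such that for all ε ∈ (0, ε₀) there is no pair (x, t) with t > 0 satisfying ‖∇L̃_{λ,r}(x,t)‖ ≤ ε. -/

import Mathlib

set_option maxHeartbeats 1000000

/-- for the problem `min x²/2 s.t. x = 0` (so `n = m = 1`), with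
`L̃_{λ,r}(x,t) = x²/2 + λx + (r/(2t))x² + (r/2)t` for `t > 0` and gradient
`∇L̃_{λ,r}(x,t) = (x + λ + (r/t)x, (r/2)(1 − x²/t²))`: for every `λ`, `c > 0` and
`r ≥ |λ| + c`, there is `ε₀ > 0` such that for all `ε ∈ (0, ε₀)` there is no `(x, t)`
with `t > 0` and `‖∇L̃_{λ,r}(x,t)‖ ≤ ε`. -/
theorem stmt11 (lam c r : ℝ) (hc : 0 < c) (hr : |lam| + c ≤ r) :
    ∃ ε₀ > (0 : ℝ), ∀ ε : ℝ, 0 < ε → ε < ε₀ →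
      ¬ ∃ x t : ℝ, 0 < t ∧
        Real.sqrt ((x + lam + (r / t) * x) ^ 2 +
          ((r / 2) * (1 - x ^ 2 / t ^ 2)) ^ 2) ≤ ε := by
  refine ⟨c / 3, by linarith, ?_⟩
  intro ε hε hεc
  rintro ⟨x, t, ht, hle⟩
  have hla : 0 ≤ |lam| := abs_nonneg _
  have hrpos : 0 < r := by linarith
  have ht' : t ≠ 0 := ne_of_gt ht
  set u : ℝ := x / t with hu
  have hux : (r / t) * x = r * u := by rw [hu]; ring
  have hux2 : x ^ 2 / t ^ 2 = u ^ 2 := by rw [hu, div_pow]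
  rw [hux, hux2] at hle
  set g1 : ℝ := x + lam + r * u with hg1
  set g2 : ℝ := (r / 2) * (1 - u ^ 2) with hg2
  have h1 : |g1| ≤ ε := by
    refine le_trans ?_ hle
    rw [← Real.sqrt_sq_eq_abs]
    exact Real.sqrt_le_sqrt (by nlinarith [sq_nonneg g2])
  have h2 : |g2| ≤ ε := by
    refine le_trans ?_ hle
    rw [← Real.sqrt_sq_eq_abs]
    exact Real.sqrt_le_sqrt (by nlinarith [sq_nonneg g1])
  obtain ⟨h1l, h1r⟩ := abs_le.mp h1
  obtain ⟨h2l, h2r⟩ := abs_le.mp h2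
  have hlam1 : -|lam| ≤ lam := neg_abs_le lam
  have hlam2 : lam ≤ |lam| := le_abs_self lam
  -- u² ≥ 1 - 2ε/r, i.e. r²u² ≥ r² - 2εr  (from g2 ≤ ε)
  have hu2 : r ^ 2 * u ^ 2 ≥ r ^ 2 - 2 * ε * r := by nlinarith
  -- |r u| ≤ ε + |lam|  (from |g1| ≤ ε and x, u same sign)
  have hru : (r * u) ^ 2 ≤ (ε + |lam|) ^ 2 := by
    rcases le_or_gt 0 x with hx | hx
    · have hu0 : 0 ≤ r * u := mul_nonneg (le_of_lt hrpos) (div_nonneg hx (le_of_lt ht))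
      exact sq_le_sq' (by linarith) (by linarith)
    · have hu0 : r * u ≤ 0 := by
        have : u < 0 := div_neg_of_neg_of_pos hx ht
        nlinarith
      exact sq_le_sq' (by linarith) (by linarith)
  -- contradiction: (ε+|lam|)² < r² - 2εr
  have h3 : 0 < c - ε := by linarith
  have key : (c - ε) * r ≤ (r - |lam| - ε) * (r + |lam| + ε) :=
    mul_le_mul (by linarith) (by linarith) (le_of_lt hrpos) (by linarith)
  nlinarith [key, hru, hu2]
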